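/- There is no orientation of the 4-cube in which exactly 7 vertices have in-degree 0, exactly 2 vertices have in-degree 2, and exactly 7 vertices have in-degree 4 (even though 7 + 2 + 7 = 2^4 and 0·7 + 2·2 + 4·7 = 4·2^3, so the vertex and edge counting conditions are satisfied). -/

import Mathlib

/-- Flip coordinate `i` of a binary `n`-tuple. -/
def flipBit {n : ℕ} (v : Fin n → ZMod 2) (i : Fin n) : Fin n → ZMod 2 :=
  Function.update v i (v i + 1)

/-- An orientation of the `n`-cube: to each edge (a pair of vertices differing in
exactly one coordinate) we assign a head, one of its two endpoints.  The edge at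
vertex `v` in direction `i` joins `v` and `flipBit v i`; `head v i` is the
assigned head of that edge, which must be one of the endpoints and must not
depend on from which endpoint the edge is viewed. -/
structure CubeOrientation (n : ℕ) where
  head : (Fin n → ZMod 2) → Fin n → (Fin n → ZMod 2)
  head_mem : ∀ v i, head v i = v ∨ head v i = flipBit v i
  compatible : ∀ v i, head (flipBit v i) i = head v i

/-- The in-degree of a vertex `v`: the number of edges incident to `v`
whose head is `v`. -/
def CubeOrientation.inDeg {n : ℕ} (o : CubeOrientation n) (v : Fin n → ZMod 2) : ℕ :=
  (Finset.univ.filter fun i : Fin n => o.head v i = v).card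

/-! ### Auxiliary material -/

private abbrev V4 := Fin 4 → ZMod 2

private def par (v : V4) : ZMod 2 := v 0 + v 1 + v 2 + v 3

private lemma par_flip : ∀ (v : V4) (i : Fin 4), par (flipBit v i) = par v + 1 := by decide

private lemma flip_ne : ∀ (v : V4) (i : Fin 4), flipBit v i ≠ v := by decide

private lemma flipBit_flipBit : ∀ (v : V4) (i : Fin 4), flipBit (flipBit v i) i = v := by decide

private lemma flip_inj : ∀ (v : V4) (i j : Fin 4), i ≠ j → flipBit v i ≠ flipBit v j := by decide

private lemma class_card : ∀ c : ZMod 2, (Finset.univ.filter fun v : V4 => par v = c).card = 8 := by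
  decide

private lemma add11 : ∀ x : ZMod 2, x + 1 + 1 = x := by decide

private lemma zmod2_ne (a b : ZMod 2) (h : a ≠ b) : a = b + 1 := by revert a b; decide

private lemma zmod2_succ_ne : ∀ x : ZMod 2, x ≠ x + 1 := by decide

private lemma zmod2_cases (a : ZMod 2) : a = 0 ∨ a = 1 := by revert a; decide

/-- Neighborhoods of distinct vertices of the 4-cube are not contained in one another. -/
private lemma nbhd_not_subset :
    ∀ w w' : V4, w ≠ w' → ∃ i : Fin 4, ∀ j : Fin 4, flipBit w i ≠ flipBit w' j := by decide

/-- The set of opposite-parity non-neighbors of `w`. -/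
private def oppNonNbrs (w : V4) : Finset V4 :=
  Finset.univ.filter fun u => par u = par w + 1 ∧ ∀ i : Fin 4, u ≠ flipBit w i

private lemma oppNonNbrs_card : ∀ w : V4, (oppNonNbrs w).card = 4 := by decide

private lemma indep_helper (A : Finset V4)
    (hind : ∀ v ∈ A, ∀ i, flipBit v i ∉ A) (c : ZMod 2)
    (h4 : (A.filter fun v => par v = c).card = 4)
    (h2 : 2 ≤ (A.filter fun v => par v = c + 1).card) : False := by
  have key : ∀ x ∈ A.filter (fun v => par v = c + 1),
      (A.filter fun v => par v = c) ⊆ oppNonNbrs x := by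
    intro x hx v hv
    rw [Finset.mem_filter] at hx hv
    refine Finset.mem_filter.mpr ⟨Finset.mem_univ _, ?_, ?_⟩
    · rw [hx.2, add11, hv.2]
    · intro i hvi
      exact hind x hx.1 i (hvi ▸ hv.1)
  obtain ⟨w, hw, w', hw', hne⟩ := Finset.one_lt_card.mp (lt_of_lt_of_le one_lt_two h2)
  have hEw : (A.filter fun v => par v = c) = oppNonNbrs w :=
    Finset.eq_of_subset_of_card_le (key w hw) (by rw [oppNonNbrs_card, h4])
  have hEw' : (A.filter fun v => par v = c) = oppNonNbrs w' :=
    Finset.eq_of_subset_of_card_le (key w' hw') (by rw [oppNonNbrs_card, h4])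
  obtain ⟨i, hi⟩ := nbhd_not_subset w w' hne
  have hu : flipBit w i ∈ oppNonNbrs w' := by
    refine Finset.mem_filter.mpr ⟨Finset.mem_univ _, ?_, hi⟩
    rw [par_flip]
    have h1 := (Finset.mem_filter.mp hw).2
    have h2 := (Finset.mem_filter.mp hw').2
    rw [h1, h2]
  rw [← hEw', hEw] at hu
  exact (Finset.mem_filter.mp hu).2.2 i rfl

/-- A 7-element independent set in the 4-cube lies in one parity class. -/
private lemma indep_parity (A : Finset V4) (hA : A.card = 7)
    (hind : ∀ v ∈ A, ∀ i, flipBit v i ∉ A) :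
    ∃ c, ∀ v ∈ A, par v = c := by
  have hfilter1 : (A.filter fun v => par v = 1) = A.filter fun v => ¬ par v = 0 := by
    apply Finset.filter_congr
    intro x _
    rcases zmod2_cases (par x) with h | h <;> simp [h]
  have hsum : (A.filter fun v => par v = 0).card + (A.filter fun v => par v = 1).card = 7 := by
    rw [hfilter1, Finset.card_filter_add_card_filter_not, hA]
  by_cases h0 : (A.filter fun v => par v = 0).card = 0
  · refine ⟨1, fun v hv => ?_⟩
    rcases zmod2_cases (par v) with h | h
    · exact absurd (Finset.card_eq_zero.mp h0 ▸ Finset.mem_filter.mpr ⟨hv, h⟩)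
        (Finset.notMem_empty v)
    · exact h
  by_cases h1 : (A.filter fun v => par v = 1).card = 0
  · refine ⟨0, fun v hv => ?_⟩
    rcases zmod2_cases (par v) with h | h
    · exact h
    · exact absurd (Finset.card_eq_zero.mp h1 ▸ Finset.mem_filter.mpr ⟨hv, h⟩)
        (Finset.notMem_empty v)
  -- both classes nonempty: each has at most 4 elements
  obtain ⟨w1, hw1⟩ := Finset.card_pos.mp (Nat.pos_of_ne_zero h1)
  obtain ⟨w0, hw0⟩ := Finset.card_pos.mp (Nat.pos_of_ne_zero h0)
  have hle0 : (A.filter fun v => par v = 0).card ≤ 4 := by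
    have hsub : (A.filter fun v => par v = 0) ⊆ oppNonNbrs w1 := by
      intro v hv
      rw [Finset.mem_filter] at hv hw1
      refine Finset.mem_filter.mpr ⟨Finset.mem_univ _, ?_, ?_⟩
      · rw [hw1.2, hv.2]; decide
      · intro i hvi
        exact hind w1 hw1.1 i (hvi ▸ hv.1)
    calc _ ≤ (oppNonNbrs w1).card := Finset.card_le_card hsub
    _ = 4 := oppNonNbrs_card w1
  have hle1 : (A.filter fun v => par v = 1).card ≤ 4 := by
    have hsub : (A.filter fun v => par v = 1) ⊆ oppNonNbrs w0 := by
      intro v hv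
      rw [Finset.mem_filter] at hv hw0
      refine Finset.mem_filter.mpr ⟨Finset.mem_univ _, ?_, ?_⟩
      · rw [hw0.2, hv.2]; decide
      · intro i hvi
        exact hind w0 hw0.1 i (hvi ▸ hv.1)
    calc _ ≤ (oppNonNbrs w0).card := Finset.card_le_card hsub
    _ = 4 := oppNonNbrs_card w0
  exfalso
  rcases Nat.eq_or_lt_of_le hle0 with h40 | h30
  · apply indep_helper A hind 0 h40
    have : ((0 : ZMod 2) + 1) = 1 := by decide
    rw [this]
    omega
  · have h41 : (A.filter fun v => par v = 1).card = 4 := by omega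
    apply indep_helper A hind 1 h41
    have : ((1 : ZMod 2) + 1) = 0 := by decide
    rw [this]
    omega

theorem no_7_2_7_orientation_of_4cube :
    ¬ ∃ o : CubeOrientation 4,
      ((Finset.univ : Finset (Fin 4 → ZMod 2)).filter fun v => o.inDeg v = 0).card = 7 ∧
      ((Finset.univ : Finset (Fin 4 → ZMod 2)).filter fun v => o.inDeg v = 2).card = 2 ∧
      ((Finset.univ : Finset (Fin 4 → ZMod 2)).filter fun v => o.inDeg v = 4).card = 7 := by
  rintro ⟨o, c0, c2, c4⟩
  set S0 := (Finset.univ : Finset V4).filter fun v => o.inDeg v = 0 with hS0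
  set S2 := (Finset.univ : Finset V4).filter fun v => o.inDeg v = 2 with hS2
  set S4 := (Finset.univ : Finset V4).filter fun v => o.inDeg v = 4 with hS4
  -- sinks have all edges in, sources have all edges out
  have sink_all : ∀ v, o.inDeg v = 4 → ∀ i, o.head v i = v := by
    intro v hv i
    have huniv : (Finset.univ.filter fun i : Fin 4 => o.head v i = v) = Finset.univ :=
      Finset.eq_univ_of_card _ (by rw [Fintype.card_fin]; exact hv)
    have : i ∈ Finset.univ.filter fun i : Fin 4 => o.head v i = v := by
      rw [huniv]; exact Finset.mem_univ i
    exact (Finset.mem_filter.mp this).2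
  have source_all : ∀ v, o.inDeg v = 0 → ∀ i, o.head v i = flipBit v i := by
    intro v hv i
    have hem : (Finset.univ.filter fun i : Fin 4 => o.head v i = v) = ∅ :=
      Finset.card_eq_zero.mp hv
    have hne : o.head v i ≠ v := fun h =>
      Finset.notMem_empty i (hem ▸ Finset.mem_filter.mpr ⟨Finset.mem_univ i, h⟩)
    rcases o.head_mem v i with h | h
    · exact absurd h hne
    · exact h
  -- disjointness and covering
  have d02 : Disjoint S0 S2 := Finset.disjoint_left.mpr fun {a} h1 h2 => by
    rw [hS0, Finset.mem_filter] at h1; rw [hS2, Finset.mem_filter] at h2; omega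
  have d04 : Disjoint S0 S4 := Finset.disjoint_left.mpr fun {a} h1 h2 => by
    rw [hS0, Finset.mem_filter] at h1; rw [hS4, Finset.mem_filter] at h2; omega
  have d24 : Disjoint S2 S4 := Finset.disjoint_left.mpr fun {a} h1 h2 => by
    rw [hS2, Finset.mem_filter] at h1; rw [hS4, Finset.mem_filter] at h2; omega
  have hUcard : (S0 ∪ S2 ∪ S4).card = 16 := by
    rw [Finset.card_union_of_disjoint (Finset.disjoint_union_left.mpr ⟨d04, d24⟩),
      Finset.card_union_of_disjoint d02, c0, c2, c4]
  have hU : S0 ∪ S2 ∪ S4 = Finset.univ :=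
    Finset.eq_univ_of_card _ (by rw [hUcard]; decide)
  have cover : ∀ v : V4, o.inDeg v = 0 ∨ o.inDeg v = 2 ∨ o.inDeg v = 4 := by
    intro v
    have : v ∈ S0 ∪ S2 ∪ S4 := hU ▸ Finset.mem_univ v
    rcases Finset.mem_union.mp this with h | h
    · rcases Finset.mem_union.mp h with h | h
      · exact Or.inl (Finset.mem_filter.mp h).2
      · exact Or.inr (Or.inl (Finset.mem_filter.mp h).2)
    · exact Or.inr (Or.inr (Finset.mem_filter.mp h).2)
  -- sinks and sources are independent sets
  have sink_indep : ∀ v ∈ S4, ∀ i, flipBit v i ∉ S4 := by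
    intro v hv i hv'
    rw [hS4, Finset.mem_filter] at hv hv'
    have h1 := sink_all v hv.2 i
    have h2 := sink_all (flipBit v i) hv'.2 i
    have h3 := o.compatible v i
    exact flip_ne v i (by rw [← h2, h3, h1])
  have source_indep : ∀ v ∈ S0, ∀ i, flipBit v i ∉ S0 := by
    intro v hv i hv'
    rw [hS0, Finset.mem_filter] at hv hv'
    have h1 := source_all v hv.2 i
    have h2 := source_all (flipBit v i) hv'.2 i
    have h3 := o.compatible v i
    refine flip_ne v i ?_
    have : flipBit (flipBit v i) i = flipBit v i := by rw [h2] at h3; rw [h3, h1]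
    rw [flipBit_flipBit] at this
    exact this.symm
  -- each lies in a single parity class
  obtain ⟨cs, hcs⟩ := indep_parity S4 c4 sink_indep
  obtain ⟨ct, hct⟩ := indep_parity S0 c0 source_indep
  -- the two classes are distinct
  have hne : ct ≠ cs := by
    intro h
    have hsub : S0 ∪ S4 ⊆ Finset.univ.filter fun v : V4 => par v = cs := by
      intro v hv
      rcases Finset.mem_union.mp hv with hv | hv
      · exact Finset.mem_filter.mpr ⟨Finset.mem_univ _, h ▸ hct v hv⟩
      · exact Finset.mem_filter.mpr ⟨Finset.mem_univ _, hcs v hv⟩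
    have := Finset.card_le_card hsub
    rw [Finset.card_union_of_disjoint d04, c0, c4, class_card] at this
    omega
  -- find the vertex of the source class that is not a source
  have hsubS0 : S0 ⊆ Finset.univ.filter fun v : V4 => par v = ct := fun v hv =>
    Finset.mem_filter.mpr ⟨Finset.mem_univ _, hct v hv⟩
  have hsd : ((Finset.univ.filter fun v : V4 => par v = ct) \ S0).Nonempty := by
    rw [← Finset.card_pos, Finset.card_sdiff_of_subset hsubS0, class_card, c0]
    omega
  obtain ⟨y, hy⟩ := hsd
  obtain ⟨hyc, hyn0⟩ := Finset.mem_sdiff.mp hy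
  have hyct : par y = ct := (Finset.mem_filter.mp hyc).2
  have hyn4 : y ∉ S4 := fun h => hne (hyct ▸ hcs y h)
  have hy2 : o.inDeg y = 2 := by
    rcases cover y with h | h | h
    · exact absurd (by rw [hS0]; exact Finset.mem_filter.mpr ⟨Finset.mem_univ y, h⟩) hyn0
    · exact h
    · exact absurd (by rw [hS4]; exact Finset.mem_filter.mpr ⟨Finset.mem_univ y, h⟩) hyn4
  -- y has two in-edges; each must come from a vertex of indegree 2
  have hy2' : 1 < (Finset.univ.filter fun i : Fin 4 => o.head y i = y).card := by
    rw [show ((Finset.univ.filter fun i : Fin 4 => o.head y i = y).card = 2) from hy2]; omega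
  obtain ⟨i, hi, j, hj, hij⟩ := Finset.one_lt_card.mp hy2'
  have hi2 : o.head y i = y := (Finset.mem_filter.mp hi).2
  have hj2 : o.head y j = y := (Finset.mem_filter.mp hj).2
  have key : ∀ k : Fin 4, o.head y k = y → flipBit y k ∈ S2 := by
    intro k hk
    have hpar : par (flipBit y k) = ct + 1 := by rw [par_flip, hyct]
    have hn0 : flipBit y k ∉ S0 := by
      intro h
      have h' := hct _ h
      rw [hpar] at h'
      exact zmod2_succ_ne ct h'.symm
    have hn4 : o.inDeg (flipBit y k) ≠ 4 := by
      intro h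
      have h1 := sink_all (flipBit y k) h k
      have h3 := o.compatible y k
      rw [h1, hk] at h3
      exact flip_ne y k h3
    rcases cover (flipBit y k) with h | h | h
    · exact absurd (by rw [hS0]; exact Finset.mem_filter.mpr ⟨Finset.mem_univ _, h⟩) hn0
    · rw [hS2]; exact Finset.mem_filter.mpr ⟨Finset.mem_univ _, h⟩
    · exact absurd h hn4
  have hiS2 : flipBit y i ∈ S2 := key i hi2
  have hjS2 : flipBit y j ∈ S2 := key j hj2
  have hyS2 : y ∈ S2 := by rw [hS2]; exact Finset.mem_filter.mpr ⟨Finset.mem_univ y, hy2⟩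
  have : 2 < S2.card := by
    apply Finset.two_lt_card_iff.mpr
    exact ⟨y, flipBit y i, flipBit y j, hyS2, hiS2, hjS2,
      fun h => flip_ne y i h.symm, fun h => flip_ne y j h.symm, flip_inj y i j hij⟩
  omega
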